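/- Let v : ℝ³ → ℝ be C¹ and positive, and suppose in polar coordinates f(r, θ) = √r v(rθ) (θ ∈ S², r > 0) satisfies ∂f/∂r(r, θ) > C r^{-1/2} for all 0 < r < r₀ and all θ. Then for all 0 < λ < |y| < r₀, one has v(y) - (λ/|y|) v(λ² y/|y|²) > (C/r₀)(|y| - λ). -/

import Mathlib

/-- key computation (23) in Step 1 of Lemma 2.2. If
`f(r, θ) = √r v(rθ)` satisfies `∂f/∂r > C r^{-1/2}` for `0 < r < r₀`, then for
`0 < λ < |y| < r₀` one has `v(y) - v^λ(y) > (C/r₀)(|y| - λ)`, where `v^λ` is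
the Kelvin transform of `v`. -/
theorem kelvin_difference_lower_bound
    (v : EuclideanSpace ℝ (Fin 3) → ℝ)
    (hv : ContDiff ℝ 1 v) (hv_pos : ∀ x, 0 < v x)
    (C r₀ : ℝ) (hC : 0 < C) (hr₀ : 0 < r₀)
    (hderiv : ∀ θ : EuclideanSpace ℝ (Fin 3), ‖θ‖ = 1 →
      ∀ r : ℝ, 0 < r → r < r₀ →
        C * r ^ (-(1 : ℝ) / 2) < deriv (fun s : ℝ => Real.sqrt s * v (s • θ)) r)
    (lam : ℝ) (hlam : 0 < lam)
    (y : EuclideanSpace ℝ (Fin 3)) (hy₁ : lam < ‖y‖) (hy₂ : ‖y‖ < r₀) :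
    (C / r₀) * (‖y‖ - lam)
      < v y - (lam / ‖y‖) * v ((lam ^ 2 / ‖y‖ ^ 2) • y) := by
  have hb : (0:ℝ) < ‖y‖ := hlam.trans hy₁
  set b := ‖y‖ with hbdef
  set θ : EuclideanSpace ℝ (Fin 3) := b⁻¹ • y with hθdef
  have hθn : ‖θ‖ = 1 := by
    rw [hθdef, norm_smul, norm_inv, Real.norm_eq_abs, abs_of_pos hb, ← hbdef,
      inv_mul_cancel₀ hb.ne']
  set a := lam ^ 2 / b with hadef
  have ha : 0 < a := div_pos (pow_pos hlam 2) hb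
  have halam : a < lam := by
    rw [hadef, div_lt_iff₀ hb]
    nlinarith
  have hab : a < b := halam.trans hy₁
  set g := fun s : ℝ => Real.sqrt s * v (s • θ) with hgdef
  have hdiffg : ∀ s : ℝ, 0 < s → DifferentiableAt ℝ g s := by
    intro s hs
    exact (((Real.hasDerivAt_sqrt hs.ne').differentiableAt).mul
      (((hv.differentiable one_ne_zero) (s • θ)).comp s
        (differentiableAt_id.smul_const θ)))
  have hcont : ContinuousOn g (Set.Icc a b) :=
    (Real.continuous_sqrt.mul
      (hv.continuous.comp (continuous_id.smul continuous_const))).continuousOn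
  have hdiff : DifferentiableOn ℝ g (Set.Ioo a b) := fun s hs =>
    (hdiffg s (ha.trans hs.1)).differentiableWithinAt
  obtain ⟨c, hc, hcd⟩ := exists_deriv_eq_slope g hab hcont hdiff
  have hcpos : 0 < c := ha.trans hc.1
  have hcr₀ : c < r₀ := hc.2.trans hy₂
  have hkey : C * c ^ (-(1 : ℝ) / 2) < deriv g c := hderiv θ hθn c hcpos hcr₀
  have hsc : (0:ℝ) < Real.sqrt c := Real.sqrt_pos.mpr hcpos
  have hsb : (0:ℝ) < Real.sqrt b := Real.sqrt_pos.mpr hb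
  have hscb : Real.sqrt c < Real.sqrt b := Real.sqrt_lt_sqrt hcpos.le hc.2
  have hsb2 : Real.sqrt b * Real.sqrt b = b := Real.mul_self_sqrt hb.le
  have hrpow : c ^ (-(1 : ℝ) / 2) = (Real.sqrt c)⁻¹ := by
    rw [Real.sqrt_eq_rpow, ← Real.rpow_neg hcpos.le]
    norm_num
  -- values of g at the endpoints
  have hgb : g b = Real.sqrt b * v y := by
    simp only [hgdef, hθdef, smul_smul, mul_inv_cancel₀ hb.ne', one_smul]
  have hga : g a = (lam / Real.sqrt b) * v ((lam ^ 2 / b ^ 2) • y) := by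
    have h1 : a • θ = (lam ^ 2 / b ^ 2) • y := by
      rw [hθdef, smul_smul, hadef]
      congr 1
      field_simp
    have h2 : Real.sqrt a = lam / Real.sqrt b := by
      rw [hadef, Real.sqrt_div (sq_nonneg lam), Real.sqrt_sq hlam.le]
    show Real.sqrt a * v (a • θ) = _
    rw [h1, h2]
  -- the mean value identity
  have hba : 0 < b - a := by linarith
  have hslope : g b - g a = deriv g c * (b - a) := by
    rw [hcd, div_mul_cancel₀ _ hba.ne']
  have hlb : C * (Real.sqrt c)⁻¹ * (b - a) < g b - g a := by
    rw [hslope]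
    have := hkey
    rw [hrpow] at this
    exact mul_lt_mul_of_pos_right this hba
  -- rewrite the goal
  have hrhs : v y - (lam / b) * v ((lam ^ 2 / b ^ 2) • y)
      = (g b - g a) / Real.sqrt b := by
    rw [hgb, hga]
    rw [eq_div_iff hsb.ne', sub_mul]
    have h4 : lam * Real.sqrt b / b = lam / Real.sqrt b := by
      rw [div_eq_div_iff hb.ne' hsb.ne']
      linear_combination lam * hsb2
    have h3 : lam / b * v ((lam ^ 2 / b ^ 2) • y) * Real.sqrt b
        = lam / Real.sqrt b * v ((lam ^ 2 / b ^ 2) • y) := by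
      rw [show lam / b * v ((lam ^ 2 / b ^ 2) • y) * Real.sqrt b
          = lam * Real.sqrt b / b * v ((lam ^ 2 / b ^ 2) • y) from by ring, h4]
    rw [h3]
    ring
  rw [hrhs]
  rw [lt_div_iff₀ hsb]
  have h4 : C * (Real.sqrt c)⁻¹ * (b - a) = C * (b - a) / Real.sqrt c := by ring
  have h5 : C / r₀ * (b - lam) * Real.sqrt b < C * (b - a) / Real.sqrt c := by
    rw [div_mul_eq_mul_div, div_mul_eq_mul_div, div_lt_div_iff₀ hr₀ hsc]
    have hblam : 0 < b - lam := by linarith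
    have e1 : Real.sqrt b * Real.sqrt c < b := by
      have := mul_lt_mul_of_pos_left hscb hsb
      linarith
    calc C * (b - lam) * Real.sqrt b * Real.sqrt c
        = (C * (b - lam)) * (Real.sqrt b * Real.sqrt c) := by ring
      _ < (C * (b - lam)) * b := mul_lt_mul_of_pos_left e1 (mul_pos hC hblam)
      _ ≤ (C * (b - a)) * b := by
          refine mul_le_mul_of_nonneg_right ?_ hb.le
          exact mul_le_mul_of_nonneg_left (by linarith) hC.le
      _ < (C * (b - a)) * r₀ := mul_lt_mul_of_pos_left hy₂ (mul_pos hC hba)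
  calc C / r₀ * (b - lam) * Real.sqrt b < C * (b - a) / Real.sqrt c := h5
    _ = C * (Real.sqrt c)⁻¹ * (b - a) := by ring
    _ < g b - g a := hlb
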